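/- Let E₁ and E₂ be two ellipses in ℝ² centered at the origin. Then for every t ∈ ℝ², area(E₁ ∩ (t + E₂)) ≤ area(E₁ ∩ E₂). That is, the translation maximizing the area of overlap of the two ellipses is the one in which their centers coincide. -/

import Mathlib

open MeasureTheory Pointwise

lemma oneD (I J : Set ℝ) (hI : IsCompact I) (hJ : IsCompact J)
    (hIne : I.Nonempty) (hJne : J.Nonempty) :
    volume I + volume J ≤ volume (I + J) := by
  set a := sSup I with ha
  set b := sInf J with hb
  have haI : a ∈ I := hI.sSup_mem hIne
  have hbJ : b ∈ J := hJ.sInf_mem hJne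
  have h1 : b +ᵥ I ⊆ I + J := by
    rintro x ⟨y, hy, rfl⟩; exact ⟨y, hy, b, hbJ, by simp [add_comm]⟩
  have h2 : a +ᵥ J ⊆ I + J := by
    rintro x ⟨y, hy, rfl⟩; exact ⟨a, haI, y, hy, rfl⟩
  have hint : (b +ᵥ I) ∩ (a +ᵥ J) ⊆ {a + b} := by
    rintro x ⟨⟨y, hy, rfl⟩, ⟨z, hz, hzz⟩⟩
    have h3 : y ≤ a := le_csSup hI.bddAbove hy
    have h4 : b ≤ z := csInf_le hJ.bddBelow hz
    have h5 : a + z = b + y := hzz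
    simp only [Set.mem_singleton_iff, vadd_eq_add]
    linarith
  have hm1 : MeasurableSet (a +ᵥ J) := (hJ.vadd a).isClosed.measurableSet
  have key : volume ((b +ᵥ I) ∪ (a +ᵥ J)) + volume ((b +ᵥ I) ∩ (a +ᵥ J)) =
      volume (b +ᵥ I) + volume (a +ᵥ J) := measure_union_add_inter _ hm1
  have hz : volume ((b +ᵥ I) ∩ (a +ᵥ J)) = 0 :=
    le_antisymm (le_trans (measure_mono hint) (by simp)) zero_le
  calc volume I + volume J = volume (b +ᵥ I) + volume (a +ᵥ J) := by
        rw [measure_vadd, measure_vadd]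
    _ = volume ((b +ᵥ I) ∪ (a +ᵥ J)) := by rw [← key, hz, add_zero]
    _ ≤ volume (I + J) := measure_mono (Set.union_subset h1 h2)

lemma slice_compact {A : Set (ℝ × ℝ)} (hA : IsCompact A) (w : ℝ) :
    IsCompact (Prod.mk w ⁻¹' A) := by
  have : Prod.mk w ⁻¹' A = Prod.snd '' (A ∩ ({w} ×ˢ Set.univ)) := by
    ext y
    constructor
    · intro hy; exact ⟨(w, y), ⟨hy, by simp⟩, rfl⟩
    · rintro ⟨⟨w', y'⟩, ⟨hp, hw, -⟩, rfl⟩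
      simp only [Set.mem_singleton_iff] at hw
      subst hw; exact hp
  rw [this]
  exact (hA.inter_right (isClosed_singleton.prod isClosed_univ)).image continuous_snd

lemma core_sym (A : Set (ℝ × ℝ)) (hA : IsCompact A)
    (hsym : ∀ w : ℝ, (Prod.mk w ⁻¹' A).Nonempty ↔ (Prod.mk (-w) ⁻¹' A).Nonempty) :
    volume A ≤ volume ((2:ℝ)⁻¹ • (A + (-A))) := by
  set B := (2:ℝ)⁻¹ • (A + (-A)) with hB
  have hBc : IsCompact B := (hA.add hA.neg).smul _
  have hAm : MeasurableSet A := hA.measurableSet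
  have hBm : MeasurableSet B := hBc.measurableSet
  have key : ∀ w : ℝ, volume (Prod.mk w ⁻¹' A) + volume (Prod.mk (-w) ⁻¹' A)
      ≤ 2 * volume (Prod.mk w ⁻¹' B) := by
    intro w
    by_cases hne : (Prod.mk w ⁻¹' A).Nonempty
    · have hne' : (Prod.mk (-w) ⁻¹' A).Nonempty := (hsym w).1 hne
      set I := Prod.mk w ⁻¹' A
      set J := -(Prod.mk (-w) ⁻¹' A) with hJ
      have hsub : (2:ℝ)⁻¹ • (I + J) ⊆ Prod.mk w ⁻¹' B := by
        rintro y ⟨z, ⟨u, hu, v, hv, rfl⟩, rfl⟩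
        refine ⟨(w, u) + (w, v), ⟨(w, u), hu, (w, v), ?_, rfl⟩, ?_⟩
        · rw [Set.mem_neg]
          have : -v ∈ Prod.mk (-w) ⁻¹' A := hv
          exact this
        · simp only [Prod.mk_add_mk, Prod.smul_mk, smul_eq_mul, Prod.mk.injEq]
          exact ⟨by ring, trivial⟩
      have h1 : volume ((2:ℝ)⁻¹ • (I + J)) = ENNReal.ofReal 2⁻¹ * volume (I + J) := by
        rw [Measure.addHaar_smul]
        norm_num [abs_of_nonneg]
      have h2 : volume I + volume J ≤ volume (I + J) :=
        oneD I J (slice_compact hA w) ((slice_compact hA (-w)).neg) hne hne'.neg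
      have h3 : volume J = volume (Prod.mk (-w) ⁻¹' A) := Measure.measure_neg _ _
      have h4 : volume (Prod.mk w ⁻¹' B) ≥ ENNReal.ofReal 2⁻¹ * volume (I + J) := by
        rw [← h1]; exact measure_mono hsub
      calc volume I + volume (Prod.mk (-w) ⁻¹' A) = volume I + volume J := by rw [h3]
        _ ≤ volume (I + J) := h2
        _ = 2 * (ENNReal.ofReal 2⁻¹ * volume (I + J)) := by
            have htwo : (2:ENNReal) * ENNReal.ofReal 2⁻¹ = 1 := by
              rw [ENNReal.ofReal_inv_of_pos (by norm_num), ENNReal.ofReal_ofNat,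
                ENNReal.mul_inv_cancel (by norm_num) (by norm_num)]
            rw [← mul_assoc, htwo, one_mul]
        _ ≤ 2 * volume (Prod.mk w ⁻¹' B) := by
            exact mul_le_mul_right h4 2
    · have hne' : ¬(Prod.mk (-w) ⁻¹' A).Nonempty := fun h => hne ((hsym w).2 h)
      rw [Set.not_nonempty_iff_eq_empty] at hne hne'
      rw [hne, hne']
      simp
  have hvolA : volume A = ∫⁻ w, volume (Prod.mk w ⁻¹' A) := by
    rw [Measure.volume_eq_prod ℝ ℝ, Measure.prod_apply hAm]
  have hvolB : volume B = ∫⁻ w, volume (Prod.mk w ⁻¹' B) := by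
    rw [Measure.volume_eq_prod ℝ ℝ, Measure.prod_apply hBm]
  have hrefl : ∫⁻ w, volume (Prod.mk (-w) ⁻¹' A) = ∫⁻ w, volume (Prod.mk w ⁻¹' A) :=
    (Measure.measurePreserving_neg (volume : Measure ℝ)).lintegral_comp
      (measurable_measure_prodMk_left hAm)
  have main : 2 * volume A ≤ 2 * volume B := by
    calc 2 * volume A = volume A + volume A := (two_mul _)
      _ = (∫⁻ w, volume (Prod.mk w ⁻¹' A)) + ∫⁻ w, volume (Prod.mk (-w) ⁻¹' A) := by
          rw [hvolA, hrefl]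
      _ = ∫⁻ w, (volume (Prod.mk w ⁻¹' A) + volume (Prod.mk (-w) ⁻¹' A)) := by
          rw [lintegral_add_left (measurable_measure_prodMk_left hAm)]
      _ ≤ ∫⁻ w, 2 * volume (Prod.mk w ⁻¹' B) := lintegral_mono key
      _ = 2 * volume B := by
          rw [lintegral_const_mul _ (measurable_measure_prodMk_left hBm), hvolB]
  exact (ENNReal.mul_le_mul_iff_right two_ne_zero ENNReal.ofNat_ne_top).mp main

lemma core (A : Set (ℝ × ℝ)) (hA : IsCompact A) (hconv : Convex ℝ A) :
    volume A ≤ volume ((2:ℝ)⁻¹ • (A + (-A))) := by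
  rcases A.eq_empty_or_nonempty with rfl | hne
  · simp
  set P := Prod.fst '' A with hP
  have hPc : IsCompact P := hA.image continuous_fst
  have hPne : P.Nonempty := hne.image _
  set p := sInf P with hp
  set q := sSup P with hq
  set c := (p + q) / 2 with hc
  have hPconv : Convex ℝ P := hconv.linear_image (LinearMap.fst ℝ ℝ ℝ)
  have hPIcc : P = Set.Icc p q := by
    apply Set.Subset.antisymm
    · intro x hx
      exact ⟨csInf_le hPc.bddBelow hx, le_csSup hPc.bddAbove hx⟩
    · intro x hx
      exact hPconv.ordConnected.out (hPc.sInf_mem hPne) (hPc.sSup_mem hPne) hx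
  set v : ℝ × ℝ := (-c, 0) with hv
  set A' := v +ᵥ A with hA'
  have hA'c : IsCompact A' := by
    rw [hA']
    exact hA.vadd v
  have hvol : volume A' = volume A := by
    rw [hA']; exact measure_vadd (μ := volume) v A
  have hsum : A' + (-A') = A + (-A) := by
    ext x
    rw [Set.mem_add, Set.mem_add]
    constructor
    · rintro ⟨u, hu, w, hw, hx⟩
      rw [hA', Set.mem_vadd_set] at hu
      obtain ⟨a, ha, hu'⟩ := hu
      rw [Set.mem_neg, hA', Set.mem_vadd_set] at hw
      obtain ⟨b, hb, hw'⟩ := hw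
      refine ⟨a, ha, -b, Set.neg_mem_neg.2 hb, ?_⟩
      have hu2 : v + a = u := hu'
      have hw2 : v + b = -w := hw'
      rw [← hx, ← hu2, show w = -(v+b) by rw [hw2, neg_neg]]
      abel
    · rintro ⟨a, ha, w, hw, hx⟩
      rw [Set.mem_neg] at hw
      refine ⟨v + a, ?_, w - v, ?_, ?_⟩
      · rw [hA', Set.mem_vadd_set]; exact ⟨a, ha, rfl⟩
      · rw [Set.mem_neg, hA', Set.mem_vadd_set]
        exact ⟨-w, hw, show v + -w = -(w - v) by abel⟩
      · show (v + a) + (w - v) = x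
        rw [← hx]; abel
  have hslice : ∀ w : ℝ, (Prod.mk w ⁻¹' A').Nonempty ↔ w + c ∈ P := by
    intro w
    constructor
    · rintro ⟨y, hy⟩
      rw [Set.mem_preimage, hA', Set.mem_vadd_set] at hy
      obtain ⟨b, hb, hbw⟩ := hy
      have h1 : b.1 = w + c := by
        have h2 : v.1 + b.1 = w := congrArg Prod.fst hbw
        rw [hv] at h2
        simp at h2
        linarith
      exact ⟨b, hb, h1⟩
    · rintro ⟨b, hb, hb1⟩
      refine ⟨b.2, ?_⟩
      rw [Set.mem_preimage, hA', Set.mem_vadd_set]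
      refine ⟨b, hb, ?_⟩
      have hb2 : v +ᵥ b = (-c + b.1, 0 + b.2) := rfl
      rw [hb2, hb1]
      simp only [Prod.mk.injEq]
      constructor <;> ring
  have hsym : ∀ w : ℝ, (Prod.mk w ⁻¹' A').Nonempty ↔ (Prod.mk (-w) ⁻¹' A').Nonempty := by
    intro w
    rw [hslice w, hslice (-w), hPIcc, Set.mem_Icc, Set.mem_Icc]
    constructor <;> intro h <;> constructor <;>
      · rw [hc] at *
        linarith [h.1, h.2]
  calc volume A = volume A' := hvol.symm
    _ ≤ volume ((2:ℝ)⁻¹ • (A' + (-A'))) := core_sym A' hA'c hsym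
    _ = volume ((2:ℝ)⁻¹ • (A + (-A))) := by rw [hsum]

noncomputable section

abbrev Plane := EuclideanSpace ℝ (Fin 2)

/-- An ellipse centered at the origin: the image of the closed unit disk
under an invertible linear map of the plane. -/
def IsOriginEllipse (E : Set Plane) : Prop :=
  ∃ L : Plane ≃ₗ[ℝ] Plane, E = L '' Metric.closedBall 0 1

def ψ : Plane ≃ᵐ ℝ × ℝ :=
  (MeasurableEquiv.toLp 2 (Fin 2 → ℝ)).symm.trans (MeasurableEquiv.finTwoArrow)

def φL : Plane →ₗ[ℝ] ℝ × ℝ where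
  toFun x := (x 0, x 1)
  map_add' x y := rfl
  map_smul' c x := rfl

lemma ψ_eq : ⇑ψ = ⇑φL := rfl

lemma hψ : MeasurePreserving ψ volume volume :=
  (volume_preserving_finTwoArrow ℝ).comp
    (EuclideanSpace.volume_preserving_symm_measurableEquiv_toLp (Fin 2))

lemma vol_image (S : Set Plane) (hS : MeasurableSet S) : volume (ψ '' S) = volume S := by
  rw [MeasurableEquiv.image_eq_preimage_symm]
  exact (hψ.symm ψ).measure_preimage hS.nullMeasurableSet

lemma planeCore (A : Set Plane) (hA : IsCompact A) (hconv : Convex ℝ A) :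
    volume A ≤ volume ((2:ℝ)⁻¹ • (A + (-A))) := by
  have hcont : Continuous ⇑ψ := by
    rw [ψ_eq]; exact φL.continuous_of_finiteDimensional
  set A' : Set (ℝ × ℝ) := ψ '' A with hA'
  have hA'c : IsCompact A' := hA.image hcont
  have hA'conv : Convex ℝ A' := by
    rw [hA', ψ_eq]; exact hconv.linear_image φL
  have himg : ψ '' ((2:ℝ)⁻¹ • (A + (-A))) = (2:ℝ)⁻¹ • (A' + (-A')) := by
    rw [hA', ψ_eq, image_smul_set, Set.image_add, Set.image_neg]
  have hBc : IsCompact ((2:ℝ)⁻¹ • (A + (-A)) : Set Plane) := (hA.add hA.neg).smul _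
  calc volume A = volume A' := (vol_image A hA.measurableSet).symm
    _ ≤ volume ((2:ℝ)⁻¹ • (A' + (-A'))) := core A' hA'c hA'conv
    _ = volume (ψ '' ((2:ℝ)⁻¹ • (A + (-A)))) := by rw [himg]
    _ = volume ((2:ℝ)⁻¹ • (A + (-A))) := vol_image _ hBc.measurableSet

lemma ellipse_props (E : Set Plane) (h : IsOriginEllipse E) :
    IsCompact E ∧ Convex ℝ E ∧ (∀ x ∈ E, -x ∈ E) := by
  obtain ⟨L, rfl⟩ := h
  refine ⟨(isCompact_closedBall 0 1).image L.toLinearMap.continuous_of_finiteDimensional,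
    (convex_closedBall _ _).linear_image L.toLinearMap, ?_⟩
  rintro x ⟨y, hy, rfl⟩
  refine ⟨-y, ?_, ?_⟩
  · simp only [Metric.mem_closedBall, dist_zero_right] at hy ⊢
    simpa using hy
  · exact (map_neg L y)

theorem ellipse_overlap_maximized_at_center (E₁ E₂ : Set Plane)
    (h₁ : IsOriginEllipse E₁) (h₂ : IsOriginEllipse E₂) (t : Plane) :
    volume (E₁ ∩ (t +ᵥ E₂)) ≤ volume (E₁ ∩ E₂) := by
  obtain ⟨hc1, hconv1, hsym1⟩ := ellipse_props E₁ h₁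
  obtain ⟨hc2, hconv2, hsym2⟩ := ellipse_props E₂ h₂
  set A := E₁ ∩ (t +ᵥ E₂) with hA
  have hAc : IsCompact A := hc1.inter_right ((hc2.vadd t).isClosed)
  have htr : Convex ℝ (t +ᵥ E₂) := hconv2.translate t
  have hAconv : Convex ℝ A := hconv1.inter htr
  have hsub : (2:ℝ)⁻¹ • (A + (-A)) ⊆ E₁ ∩ E₂ := by
    rintro x ⟨z, ⟨u, hu, w, hw, rfl⟩, rfl⟩
    rw [Set.mem_neg] at hw
    have hu1 : u ∈ E₁ := hu.1
    have hw1 : w ∈ E₁ := by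
      have h3 := hsym1 _ hw.1
      rwa [neg_neg] at h3
    have heq : (2:ℝ)⁻¹ • (u + w) = (2:ℝ)⁻¹ • u + (2:ℝ)⁻¹ • w := smul_add _ _ _
    constructor
    · show (2:ℝ)⁻¹ • (u + w) ∈ E₁
      rw [heq]
      exact hconv1 hu1 hw1 (by norm_num) (by norm_num) (by norm_num)
    · obtain ⟨a, ha, hua⟩ := hu.2
      obtain ⟨b, hb, hwb⟩ := hw.2
      have hb' : -b ∈ E₂ := hsym2 b hb
      have huw : u + w = a + (-b) := by
        have h4 : t + a = u := hua
        have h5 : t + b = -w := hwb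
        have h6 : w = -(t + b) := by rw [h5, neg_neg]
        rw [← h4, h6]; abel
      show (2:ℝ)⁻¹ • (u + w) ∈ E₂
      rw [huw, smul_add]
      exact hconv2 ha hb' (by norm_num) (by norm_num) (by norm_num)
  calc volume A ≤ volume ((2:ℝ)⁻¹ • (A + (-A))) := planeCore A hAc hAconv
    _ ≤ volume (E₁ ∩ E₂) := measure_mono hsub
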